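/- With the setup of the previous theorem (soc P(λ) = Ae·soc P(λ) for all λ ∈ Λ'), for any λ, μ ∈ Λ' and any nonzero A-module homomorphism θ : P(λ) → P(μ), the restriction of θ to t(P(λ)) = Ae·P(λ) is nonzero. -/
import Mathlib


/-- The trace submodule `t(M) = AeM` of `M`. -/
def traceSub (A : Type) [Ring A] (e : A) (M : Type) [AddCommGroup M] [Module A M] :
    Submodule A M :=
  Submodule.span A (Set.range fun m : M => e • m)

/-- The socle of a module: the sum of all its simple submodules. -/
def socleSub (A : Type) [Ring A] (M : Type) [AddCommGroup M] [Module A M] :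
    Submodule A M :=
  sSup {S : Submodule A M | IsSimpleModule A ↥S}

/-- `Ae·N` for a submodule `N` of `M`. -/
def eTr (A : Type) [Ring A] (e : A) {M : Type} [AddCommGroup M] [Module A M]
    (N : Submodule A M) : Submodule A M :=
  Submodule.span A ((fun x => e • x) '' (N : Set M))

section Aux

variable (A : Type) [Ring A] (M : Type) [AddCommGroup M] [Module A M]

/-- The socle, regarded as a module, is semisimple. -/
lemma socle_isSemisimple : IsSemisimpleModule A ↥(socleSub A M) := by
  apply IsSemisimpleModule.of_sSup_simples_eq_top
  set S := socleSub A M with hS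
  apply Submodule.map_injective_of_injective (Submodule.injective_subtype S)
  rw [(Submodule.gc_map_comap S.subtype).l_sSup]
  rw [Submodule.map_subtype_top]
  apply le_antisymm
  · refine iSup_le fun m => iSup_le fun _ => ?_
    exact Submodule.map_subtype_le S m
  · -- S = sSup of simple submodules of M, each of which is ≤ S hence in the image
    conv_lhs => rw [hS, socleSub]
    refine sSup_le fun T hT => ?_
    have hTS : T ≤ S := le_sSup hT
    have hmc : Submodule.map S.subtype (Submodule.comap S.subtype T) = T := by
      rw [Submodule.map_comap_subtype, inf_eq_right.mpr hTS]
    have hsimple : IsSimpleModule A ↥(Submodule.comap S.subtype T) := by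
      have heq := Submodule.equivMapOfInjective S.subtype (Submodule.injective_subtype S)
        (Submodule.comap S.subtype T)
      rw [hmc] at heq
      haveI : IsSimpleModule A ↥T := hT
      exact IsSimpleModule.congr heq
    calc T = Submodule.map S.subtype (Submodule.comap S.subtype T) := hmc.symm
      _ ≤ ⨆ m ∈ {m : Submodule A ↥S | IsSimpleModule A ↥m}, Submodule.map S.subtype m := by
          exact le_iSup₂ (f := fun m _ => Submodule.map S.subtype m)
            (Submodule.comap S.subtype T) hsimple

/-- If the socle satisfies `Ae·soc = soc`, then `e` does not annihilate any
nonzero submodule of the socle. -/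
lemma atom_not_killed (e : A) {a : Submodule A M} (ha : IsAtom a)
    (haS : a ≤ socleSub A M) (hsoc : eTr A e (socleSub A M) = socleSub A M) :
    ∃ s ∈ a, e • s ≠ 0 := by
  by_contra h
  push_neg at h
  set S := socleSub A M with hS
  have hss : IsSemisimpleModule A ↥S := socle_isSemisimple A M
  -- complement of a inside S
  obtain ⟨c', hc'⟩ := exists_isCompl (Submodule.comap S.subtype a)
  set C : Submodule A M := Submodule.map S.subtype c' with hC
  have hCS : C ≤ S := Submodule.map_subtype_le S c'
  -- every e • x for x ∈ S lies in C
  have hkey : ∀ x ∈ S, e • x ∈ C := by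
    intro x hx
    have : (⟨x, hx⟩ : ↥S) ∈ Submodule.comap S.subtype a ⊔ c' := by
      rw [hc'.sup_eq_top]; trivial
    obtain ⟨y, hy, z, hz, hyz⟩ := Submodule.mem_sup.mp this
    have hx' : x = (y : M) + (z : M) := by
      have := congrArg (Subtype.val) hyz
      simpa using this.symm
    have hey : e • (y : M) = 0 := h _ hy
    have hez : e • (z : M) ∈ C := Submodule.smul_mem C e ⟨z, hz, rfl⟩
    rw [hx', smul_add, hey, zero_add]
    exact hez
  have hle : S ≤ C := by
    conv_lhs => rw [← hsoc]
    rw [eTr]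
    refine Submodule.span_le.mpr ?_
    rintro _ ⟨x, hx, rfl⟩
    exact hkey x hx
  have haC : a ≤ C := le_trans haS hle
  -- but a ⊓ C = ⊥
  have hmapa : Submodule.map S.subtype (Submodule.comap S.subtype a) = a := by
    rw [Submodule.map_comap_subtype, inf_eq_right.mpr haS]
  have hdisj : a ⊓ C = ⊥ := by
    rw [← hmapa, hC, ← Submodule.map_inf _ (Submodule.injective_subtype S),
      hc'.inf_eq_bot, Submodule.map_bot]
  have : a = ⊥ := by
    rw [← hdisj, inf_eq_left.mpr haC]
  exact ha.1 this

end Aux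

/-- With indecomposable projective modules `P(λ)`, `P(μ)` whose socles
`S` satisfy `S = AeS`, every nonzero homomorphism `θ : P(λ) → P(μ)` has nonzero
restriction to `t(P(λ)) = Ae·P(λ)`. -/
theorem restriction_nonzero
    (K : Type) [Field K] (A : Type) [Ring A] [Algebra K A] [FiniteDimensional K A]
    (e : A) (he : IsIdempotentElem e)
    (Pl Pm : Type) [AddCommGroup Pl] [Module A Pl] [AddCommGroup Pm] [Module A Pm]
    [Module.Finite A Pl] [Module.Finite A Pm]
    (hprojl : Module.Projective A Pl) (hprojm : Module.Projective A Pm)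
    (hntl : Nontrivial Pl) (hntm : Nontrivial Pm)
    (hindecl : ∀ N₁ N₂ : Submodule A Pl, IsCompl N₁ N₂ → N₁ = ⊥ ∨ N₂ = ⊥)
    (hindecm : ∀ N₁ N₂ : Submodule A Pm, IsCompl N₁ N₂ → N₁ = ⊥ ∨ N₂ = ⊥)
    (hsocl : eTr A e (socleSub A Pl) = socleSub A Pl)
    (hsocm : eTr A e (socleSub A Pm) = socleSub A Pm) :
    ∀ θ : Pl →ₗ[A] Pm, θ ≠ 0 → ∃ x ∈ traceSub A e Pl, θ x ≠ 0 := by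
  intro θ hθ
  -- A is an Artinian ring, hence Pm is an Artinian A-module
  have hA : IsArtinianRing A := isArtinian_of_tower K inferInstance
  have hArt : IsArtinian A Pm := isArtinian_of_fg_of_artinian' (R := A) (M := Pm)
  have hAtomic : IsAtomic (Submodule A Pm) :=
    isAtomic_of_orderBot_wellFounded_lt (IsWellFounded.wf)
  -- the range of θ is nonzero, hence contains an atom
  have hrange : LinearMap.range θ ≠ ⊥ := by
    intro hbot
    apply hθ
    ext x
    have : θ x ∈ LinearMap.range θ := ⟨x, rfl⟩
    rw [hbot] at this
    simpa using this
  obtain ⟨a, ha, haθ⟩ := (hAtomic.eq_bot_or_exists_atom_le (LinearMap.range θ)).resolve_left hrange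
  -- a is an atom hence a simple submodule, hence contained in the socle
  have hsimple : IsSimpleModule A ↥a := (isSimpleModule_iff_isAtom (m := a)).mpr ha
  have haS : a ≤ socleSub A Pm := le_sSup hsimple
  obtain ⟨s, hs, hes⟩ := atom_not_killed A Pm e ha haS hsocm
  obtain ⟨y, hy⟩ := haθ hs
  refine ⟨e • y, ?_, ?_⟩
  · exact Submodule.subset_span ⟨y, rfl⟩
  · rw [map_smul, hy]
    exact hes
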